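/- For any finite-dimensional complex Hilbert spaces and linear maps f : A → B ⊗ X and g : A → B ⊗ Y, if there exist isometries u : X → Z and v : Y → Z with (id_B ⊗ u) ∘ f = (id_B ⊗ v) ∘ g, then Tr_X(f ρ f†) = Tr_Y(g ρ g†) for every operator ρ on A. -/
import Mathlib


open Matrix Kronecker

/-- Partial trace over the second tensor factor. -/
noncomputable def ptrace {b x : Type*} [Fintype x] (M : Matrix (b × x) (b × x) ℂ) :
    Matrix b b ℂ :=
  fun i j => ∑ k : x, M (i, k) (j, k)

lemma ptrace_conj {b x z : Type*} [Fintype b] [Fintype x] [Fintype z]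
    [DecidableEq b] [DecidableEq x]
    (u : Matrix z x ℂ) (hu : uᴴ * u = 1) (M : Matrix (b × x) (b × x) ℂ) :
    ptrace ((((1 : Matrix b b ℂ) ⊗ₖ u) * M) * ((1 : Matrix b b ℂ) ⊗ₖ u)ᴴ) = ptrace M := by
  funext i j
  have key : ∀ p q : x, ∑ k : z, u k p * (starRingEnd ℂ) (u k q) = if q = p then 1 else 0 := by
    intro p q
    have := congrFun (congrFun hu q) p
    simpa [mul_apply, one_apply, mul_comm] using this
  simp only [ptrace, mul_apply, conjTranspose_apply, kroneckerMap_apply, one_apply,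
    Fintype.sum_prod_type, ite_mul, zero_mul, apply_ite (star : ℂ → ℂ), star_zero, mul_ite,
    mul_zero, one_mul, Finset.sum_ite_irrel, Finset.sum_const_zero, Finset.sum_ite_eq', Finset.sum_ite_eq, Finset.mem_univ, if_true]
  calc ∑ k : z, ∑ q : x, (∑ p : x, u k p * M (i, p) (j, q)) * star (u k q)
      = ∑ q : x, ∑ p : x, M (i, p) (j, q) * ∑ k : z, u k p * (starRingEnd ℂ) (u k q) := by
        rw [Finset.sum_comm]
        refine Finset.sum_congr rfl fun q _ => ?_
        simp only [Finset.sum_mul]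
        rw [Finset.sum_comm]
        refine Finset.sum_congr rfl fun p _ => ?_
        rw [Finset.mul_sum]
        refine Finset.sum_congr rfl fun k _ => ?_
        rw [starRingEnd_apply]
        ring
    _ = ∑ k : x, M (i, k) (j, k) := by
        simp [key]

/-- If `(1_B ⊗ u) f = (1_B ⊗ v) g` for isometries `u`, `v`, then the induced
completely positive maps agree: `Tr_X (f ρ f†) = Tr_Y (g ρ g†)` for all `ρ`. -/
theorem iso_rel_implies_cp_rel
    {a b x y z : Type*} [Fintype a] [Fintype b] [Fintype x] [Fintype y] [Fintype z]
    [DecidableEq b] [DecidableEq x] [DecidableEq y]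
    (f : Matrix (b × x) a ℂ) (g : Matrix (b × y) a ℂ)
    (u : Matrix z x ℂ) (v : Matrix z y ℂ)
    (hu : uᴴ * u = 1) (hv : vᴴ * v = 1)
    (h : ((1 : Matrix b b ℂ) ⊗ₖ u) * f = ((1 : Matrix b b ℂ) ⊗ₖ v) * g) :
    ∀ ρ : Matrix a a ℂ, ptrace (f * ρ * fᴴ) = ptrace (g * ρ * gᴴ) := by
  intro ρ
  calc ptrace (f * ρ * fᴴ)
      = ptrace ((((1 : Matrix b b ℂ) ⊗ₖ u) * (f * ρ * fᴴ)) * ((1 : Matrix b b ℂ) ⊗ₖ u)ᴴ) :=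
        (ptrace_conj u hu _).symm
    _ = ptrace (((((1 : Matrix b b ℂ) ⊗ₖ u) * f) * ρ) * (((1 : Matrix b b ℂ) ⊗ₖ u) * f)ᴴ) := by
        rw [conjTranspose_mul]; simp only [Matrix.mul_assoc]
    _ = ptrace (((((1 : Matrix b b ℂ) ⊗ₖ v) * g) * ρ) * (((1 : Matrix b b ℂ) ⊗ₖ v) * g)ᴴ) := by
        rw [h]
    _ = ptrace ((((1 : Matrix b b ℂ) ⊗ₖ v) * (g * ρ * gᴴ)) * ((1 : Matrix b b ℂ) ⊗ₖ v)ᴴ) := by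
        rw [conjTranspose_mul]; simp only [Matrix.mul_assoc]
    _ = ptrace (g * ρ * gᴴ) := ptrace_conj v hv _
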